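/- arXiv:math/0511197 — 6 statements merged into one kernel-verified Lean document; each statement's English description precedes it below -/
import Mathlib

section
/- Let 𝔞 be a small preadditive category, 𝒞 a Grothendieck category, and u : 𝔞 → 𝒞 an additive functor. If u is fully faithful and the objects u(A), for A ∈ 𝔞, are projective, finitely presented, and form a generating family in 𝒞, then the restricted Yoneda functor 𝒞 → Mod(𝔞), sending C to the module A ↦ Hom_𝒞(u(A), C), is an equivalence of categories. -/
/-!
Statement 0: Let 𝔞 be a small preadditive category, 𝒞 a Grothendieck category, and
`u : 𝔞 ⥤ 𝒞` an additive functor.  If `u` is fully faithful and the objects `u A` are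
projective, finitely presented and form a generating family in 𝒞, then the restricted
Yoneda functor `𝒞 ⥤ Mod 𝔞`, `C ↦ (A ↦ Hom(u A, C))`, is an equivalence.
-/

open CategoryTheory Limits Opposite

universe v u

/-- The category of right modules over a small preadditive category `𝔞`, i.e. the full
subcategory of `𝔞ᵒᵖ ⥤ Ab` consisting of additive functors. -/
abbrev ModuleCategory (𝔞 : Type v) [SmallCategory 𝔞] [Preadditive 𝔞] : Type (v + 1) :=
  ObjectProperty.FullSubcategory (fun F : 𝔞ᵒᵖ ⥤ AddCommGrpCat.{v} => F.Additive)

/-- The restricted Yoneda functor associated to an additive functor `u : 𝔞 ⥤ 𝒞`,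
sending `C` to the right `𝔞`-module `A ↦ Hom_𝒞(u A, C)`. -/
noncomputable def restrictedYoneda {𝔞 : Type v} [SmallCategory 𝔞] [Preadditive 𝔞]
    {𝒞 : Type u} [Category.{v} 𝒞] [Preadditive 𝒞] (u : 𝔞 ⥤ 𝒞) [u.Additive] :
    𝒞 ⥤ ModuleCategory 𝔞 :=
  ObjectProperty.lift _
    (preadditiveYoneda ⋙ (Functor.whiskeringLeft 𝔞ᵒᵖ 𝒞ᵒᵖ AddCommGrpCat.{v}).obj u.op)
    (fun _ => Functor.instAdditiveComp _ _)

namespace Statement0Aux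

variable {𝔞 : Type v} [SmallCategory 𝔞] [Preadditive 𝔞]
  {𝒞 : Type u} [Category.{v} 𝒞] [Abelian 𝒞] [HasColimits 𝒞]
  (u : 𝔞 ⥤ 𝒞) [u.Additive]
  {ι : Type v} [DecidableEq ι] (f : ι → 𝔞)

noncomputable def theta (B : 𝔞) :
    (DirectSum ι fun i => (B ⟶ f i)) →+ (u.obj B ⟶ ∐ fun i => u.obj (f i)) :=
  DirectSum.toAddMonoid fun i =>
    (Preadditive.rightComp _ (Sigma.ι (fun i => u.obj (f i)) i)).comp u.mapAddHom

lemma theta_of (B : 𝔞) (i : ι) (m : B ⟶ f i) :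
    theta u f B (DirectSum.of (fun i => (B ⟶ f i)) i m)
      = u.map m ≫ Sigma.ι (fun i => u.obj (f i)) i :=
  DirectSum.toAddMonoid_of _ _ _

noncomputable def rho (i : ι) : (∐ fun i => u.obj (f i)) ⟶ u.obj (f i) :=
  Sigma.desc fun j => if h : j = i then eqToHom (by rw [h]) else 0

lemma theta_rho (B : 𝔞) (z : DirectSum ι fun i => (B ⟶ f i)) (i : ι) :
    theta u f B z ≫ rho u f i = u.map (z i) := by
  induction z using DirectSum.induction_on with
  | zero => simp [u.map_zero]
  | of j m =>
    rw [theta_of, Category.assoc, rho, colimit.ι_desc]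
    by_cases h : j = i
    · subst h
      simp [DirectSum.of_eq_same]
    · simp [h, DirectSum.of_eq_of_ne _ _ _ (Ne.symm h), u.map_zero]
  | add x y hx hy =>
    rw [map_add, Preadditive.add_comp, hx, hy, DirectSum.add_apply, u.map_add]

lemma theta_injective [u.Faithful] (B : 𝔞) : Function.Injective (theta u f B) := by
  intro z z' h
  refine DFinsupp.ext fun i => u.map_injective ?_
  rw [← theta_rho u f B z i, ← theta_rho u f B z' i, h]

noncomputable def coprodProj {J : Type v} [DecidableEq J] (fam : J → 𝒞) [HasCoproduct fam]
    (x : J) : (∐ fam) ⟶ fam x :=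
  Sigma.desc fun y => if h : y = x then eqToHom (by rw [h]) else 0

omit [HasColimits 𝒞] in
lemma coproduct_total {J : Type v} [Fintype J] [DecidableEq J] (fam : J → 𝒞)
    [HasCoproduct fam] :
    (𝟙 (∐ fam)) = ∑ x : J, coprodProj (𝒞 := 𝒞) fam x ≫ Sigma.ι fam x := by
  apply colimit.hom_ext
  rintro ⟨y⟩
  rw [Preadditive.comp_sum]
  rw [Finset.sum_eq_single y]
  · simp [coprodProj]
  · intro x _ hxy
    have : (Sigma.ι fam y : fam y ⟶ ∐ fam) ≫ coprodProj fam x = 0 := by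
      simp [coprodProj, Ne.symm hxy]
    rw [← Category.assoc]
    erw [this]
    simp
  · intro hy
    exact absurd (Finset.mem_univ y) hy

omit [HasColimits 𝒞] in
lemma coproduct_decomp {J : Type v} [Fintype J] [DecidableEq J] (fam : J → 𝒞)
    [HasCoproduct fam] {T : 𝒞} (g' : T ⟶ ∐ fam) :
    g' = ∑ x : J, (g' ≫ coprodProj fam x) ≫ Sigma.ι fam x := by
  calc g' = g' ≫ 𝟙 (∐ fam) := (Category.comp_id g').symm
    _ = g' ≫ ∑ x : J, coprodProj fam x ≫ Sigma.ι fam x := by rw [← coproduct_total]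
    _ = ∑ x : J, (g' ≫ coprodProj fam x) ≫ Sigma.ι fam x := by
        rw [Preadditive.comp_sum]; simp [Category.assoc]

lemma theta_surjective [u.Full] (B : 𝔞)
    [PreservesFilteredColimitsOfSize.{v, v} (coyoneda.obj (op (u.obj B)))] :
    Function.Surjective (theta u f B) := by
  classical
  intro g
  set F : Discrete ι ⥤ 𝒞 := Discrete.functor fun i => u.obj (f i) with hF
  let cc := CoproductsFromFiniteFiltered.liftToFinsetColimitCocone F
  let e : colimit F ≅ colimit (CoproductsFromFiniteFiltered.liftToFinsetObj F) :=
    colimit.isoColimitCocone cc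
  have hc : IsColimit ((coyoneda.obj (op (u.obj B))).mapCocone
      (colimit.cocone (CoproductsFromFiniteFiltered.liftToFinsetObj F))) :=
    isColimitOfPreserves _ (colimit.isColimit _)
  obtain ⟨S, g', hg'⟩ := Types.jointly_surjective_of_isColimit hc (g ≫ e.hom)
  have h1 : g = g' ≫ colimit.ι (CoproductsFromFiniteFiltered.liftToFinsetObj F) S ≫ e.inv := by
    rw [← Category.assoc]
    rw [show g' ≫ colimit.ι (CoproductsFromFiniteFiltered.liftToFinsetObj F) S
      = g ≫ e.hom from hg']
    simp
  have key : ∀ x : S, Sigma.ι (fun x : S => F.obj x.val) x ≫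
      colimit.ι (CoproductsFromFiniteFiltered.liftToFinsetObj F) S ≫ e.inv
      = Sigma.ι (fun i => u.obj (f i)) x.val.as :=
    fun x => CoproductsFromFiniteFiltered.liftToFinsetColimIso_aux F x
  have hdec' : g' = ∑ x : S, (g' ≫ coprodProj (fun x : S => F.obj x.val) x) ≫
      Sigma.ι (fun x : S => F.obj x.val) x :=
    coproduct_decomp (fun x : S => F.obj x.val) g'
  have hgdec : g = ∑ x : S, (g' ≫ coprodProj (fun x : S => F.obj x.val) x) ≫
      Sigma.ι (fun i => u.obj (f i)) x.val.as := by
    calc g = g' ≫ colimit.ι (CoproductsFromFiniteFiltered.liftToFinsetObj F) S ≫ e.inv := h1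
      _ = (∑ x : S, (g' ≫ coprodProj (fun x : S => F.obj x.val) x) ≫
            Sigma.ι (fun x : S => F.obj x.val) x) ≫
            colimit.ι (CoproductsFromFiniteFiltered.liftToFinsetObj F) S ≫ e.inv := by
          exact congrArg (fun t => t ≫ colimit.ι (CoproductsFromFiniteFiltered.liftToFinsetObj F) S ≫ e.inv) hdec'
      _ = ∑ x : S, (g' ≫ coprodProj (fun x : S => F.obj x.val) x) ≫
            Sigma.ι (fun i => u.obj (f i)) x.val.as := by
          rw [Preadditive.sum_comp]
          exact Finset.sum_congr rfl fun x _ => by rw [Category.assoc, key x]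
  have hcomp : ∀ x : S, ∃ m : B ⟶ f x.val.as,
      u.map m = g' ≫ coprodProj (fun x : S => F.obj x.val) x :=
    fun x => u.map_surjective _
  choose m hm using hcomp
  refine ⟨∑ x : S, DirectSum.of (fun i => (B ⟶ f i)) x.val.as (m x), ?_⟩
  rw [map_sum, hgdec]
  exact Finset.sum_congr rfl fun x _ => by rw [theta_of, hm]

section Faithful

lemma ry_faithful
    (hgen : ∀ C : 𝒞, ∃ (ι : Type v) (f : ι → 𝔞) (p : (∐ fun i => u.obj (f i)) ⟶ C), Epi p) :
    (restrictedYoneda u).Faithful := by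
  refine ⟨fun {C D} {f₁ f₂} h => ?_⟩
  obtain ⟨ι, ff, p, hp⟩ := hgen C
  haveI := hp
  rw [← cancel_epi p]
  apply colimit.hom_ext
  rintro ⟨i⟩
  have h2 : (((restrictedYoneda u).map f₁).hom.app (op (ff i)))
        (Sigma.ι (fun i => u.obj (ff i)) i ≫ p)
      = (((restrictedYoneda u).map f₂).hom.app (op (ff i)))
        (Sigma.ι (fun i => u.obj (ff i)) i ≫ p) := by rw [h]
  have h3 : (Sigma.ι (fun i => u.obj (ff i)) i ≫ p) ≫ f₁
      = (Sigma.ι (fun i => u.obj (ff i)) i ≫ p) ≫ f₂ := h2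
  simpa [Category.assoc] using h3

end Faithful

section Full

lemma ry_full [u.Full] [u.Faithful]
    (hproj : ∀ A : 𝔞, Projective (u.obj A))
    (hfp : ∀ A : 𝔞, PreservesFilteredColimitsOfSize.{v, v} (coyoneda.obj (op (u.obj A))))
    (hgen : ∀ C : 𝒞, ∃ (ι : Type v) (f : ι → 𝔞) (p : (∐ fun i => u.obj (f i)) ⟶ C), Epi p) :
    (restrictedYoneda u).Full := by
  classical
  refine ⟨fun {C D} φ => ?_⟩
  obtain ⟨ι, f, p, hp⟩ := hgen C
  haveI := hp
  -- Φ A g := φ applied to g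
  let Φ : ∀ (A : 𝔞), (u.obj A ⟶ C) → (u.obj A ⟶ D) := fun A g => φ.hom.app (op A) g
  have Φnat : ∀ {B A : 𝔞} (n : B ⟶ A) (g : u.obj A ⟶ C),
      Φ B (u.map n ≫ g) = u.map n ≫ Φ A g := by
    intro B A n g
    have h2 := ConcreteCategory.congr_hom (φ.hom.naturality n.op) g
    exact h2
  have Φadd : ∀ (A : 𝔞) (g g' : u.obj A ⟶ C), Φ A (g + g') = Φ A g + Φ A g' := by
    intro A g g'
    exact (φ.hom.app (op A)).hom.map_add g g'
  have Φzero : ∀ (A : 𝔞), Φ A 0 = 0 := by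
    intro A
    exact (φ.hom.app (op A)).hom.map_zero
  let q : (∐ fun i => u.obj (f i)) ⟶ D :=
    Sigma.desc fun i => Φ (f i) (Sigma.ι (fun i => u.obj (f i)) i ≫ p)
  have hq : ∀ i : ι, Sigma.ι (fun i => u.obj (f i)) i ≫ q
      = Φ (f i) (Sigma.ι (fun i => u.obj (f i)) i ≫ p) := fun i => colimit.ι_desc _ _
  have key : ∀ (B : 𝔞) (g : u.obj B ⟶ ∐ fun i => u.obj (f i)),
      g ≫ q = Φ B (g ≫ p) := by
    intro B g
    haveI := hfp B
    obtain ⟨z, rfl⟩ := theta_surjective u f B g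
    induction z using DirectSum.induction_on with
    | zero => rw [map_zero]; simp [Φzero B]
    | of i m =>
      rw [theta_of, Category.assoc, hq i, Category.assoc, ← Φnat m]
    | add x y hx hy =>
      rw [map_add, Preadditive.add_comp, hx, hy, Preadditive.add_comp, Φadd]
  -- q kills the kernel of p
  have hker : kernel.ι p ≫ q = 0 := by
    obtain ⟨ι', f', p', hp'⟩ := hgen (kernel p)
    haveI := hp'
    rw [← cancel_epi p']
    apply colimit.hom_ext
    rintro ⟨j⟩
    have h0 : (Sigma.ι (fun j => u.obj (f' j)) j ≫ p' ≫ kernel.ι p) ≫ p = 0 := by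
      rw [Category.assoc, Category.assoc, kernel.condition, comp_zero, comp_zero]
    have h1 := key (f' j) (Sigma.ι (fun j => u.obj (f' j)) j ≫ p' ≫ kernel.ι p)
    rw [h0, Φzero] at h1
    simpa [Category.assoc] using h1
  refine ⟨Abelian.epiDesc p q hker, ?_⟩
  apply ObjectProperty.hom_ext
  apply NatTrans.ext
  funext X
  refine AddCommGrpCat.ext fun g => ?_
  show (g ≫ Abelian.epiDesc p q hker : u.obj X.unop ⟶ D) = φ.hom.app X g
  haveI := hproj X.unop
  haveI : Projective (unop (u.op.obj X)) := hproj X.unop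
  have hg' : Projective.factorThru (g : u.obj X.unop ⟶ C) p ≫ p = g :=
    Projective.factorThru_comp _ _
  calc (g ≫ Abelian.epiDesc p q hker : u.obj X.unop ⟶ D)
      = Projective.factorThru (g : u.obj X.unop ⟶ C) p ≫ p ≫ Abelian.epiDesc p q hker := by
        rw [← Category.assoc, hg']
    _ = Projective.factorThru (g : u.obj X.unop ⟶ C) p ≫ q := by rw [Abelian.comp_epiDesc]
    _ = Φ X.unop (Projective.factorThru (g : u.obj X.unop ⟶ C) p ≫ p) := key _ _
    _ = Φ X.unop g := by rw [hg']

lemma ry_essSurj [u.Full] [u.Faithful]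
    (hproj : ∀ A : 𝔞, Projective (u.obj A))
    (hfp : ∀ A : 𝔞, PreservesFilteredColimitsOfSize.{v, v} (coyoneda.obj (op (u.obj A)))) :
    (restrictedYoneda u).EssSurj := by
  classical
  constructor
  rintro ⟨M, hM⟩
  haveI := hM
  let I : Type v := Σ A : 𝔞, M.obj (op A)
  let f₀ : I → 𝔞 := Sigma.fst
  -- the "augmentation" map π
  let σ : ∀ B : 𝔞, (DirectSum I fun i => (B ⟶ f₀ i)) →+ M.obj (op B) := fun B =>
    DirectSum.toAddMonoid fun i =>
      AddMonoidHom.mk' (fun m => M.map m.op i.2) (fun m m' => by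
        show (M.map (m + m').op) i.2 = (M.map m.op) i.2 + (M.map m'.op) i.2
        have h1 : (m + m').op = m.op + m'.op := rfl
        rw [h1, M.map_add]
        rfl)
  let θ₀ : ∀ B : 𝔞, (DirectSum I fun i => (B ⟶ f₀ i)) ≃+
      (u.obj B ⟶ ∐ fun i => u.obj (f₀ i)) := fun B =>
    AddEquiv.ofBijective (theta u f₀ B)
      ⟨theta_injective u f₀ B, by haveI := hfp B; exact theta_surjective u f₀ B⟩
  let π : ∀ B : 𝔞, (u.obj B ⟶ ∐ fun i => u.obj (f₀ i)) →+ M.obj (op B) := fun B =>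
    (σ B).comp (θ₀ B).symm.toAddMonoidHom
  have π_theta : ∀ (B : 𝔞) (z : DirectSum I fun i => (B ⟶ f₀ i)),
      π B (theta u f₀ B z) = σ B z := by
    intro B z
    show σ B ((θ₀ B).symm ((θ₀ B) z)) = σ B z
    rw [AddEquiv.symm_apply_apply]
  have π_of : ∀ (B : 𝔞) (i : I) (m : B ⟶ f₀ i),
      π B (u.map m ≫ Sigma.ι (fun i => u.obj (f₀ i)) i) = M.map m.op i.2 := by
    intro B i m
    rw [← theta_of, π_theta]
    exact DirectSum.toAddMonoid_of _ _ _
  have π_nat : ∀ {B' B : 𝔞} (n : B' ⟶ B) (g : u.obj B ⟶ ∐ fun i => u.obj (f₀ i)),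
      π B' (u.map n ≫ g) = M.map n.op (π B g) := by
    intro B' B n g
    obtain ⟨z, rfl⟩ := (θ₀ B).surjective g
    show π B' (u.map n ≫ theta u f₀ B z) = M.map n.op (π B (theta u f₀ B z))
    induction z using DirectSum.induction_on with
    | zero => simp only [map_zero, Limits.comp_zero]
    | of i m =>
      rw [theta_of, ← Category.assoc, ← u.map_comp, π_of, π_of]
      have h1 : (n ≫ m).op = m.op ≫ n.op := rfl
      rw [h1, M.map_comp]
      rfl
    | add x y hx hy =>
      simp only [map_add, Preadditive.comp_add] at hx hy ⊢
      rw [hx, hy]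
  have π_surj : ∀ (B : 𝔞) (x : M.obj (op B)), ∃ g, π B g = x := by
    intro B x
    refine ⟨theta u f₀ B (DirectSum.of (fun i : I => (B ⟶ f₀ i)) ⟨B, x⟩ (𝟙 B)), ?_⟩
    rw [π_theta]
    have h1 : σ B (DirectSum.of (fun i : I => (B ⟶ f₀ i)) ⟨B, x⟩ (𝟙 B))
        = M.map (𝟙 B).op x := DirectSum.toAddMonoid_of _ _ _
    rw [h1]
    have h2 : (𝟙 B).op = 𝟙 (op B) := rfl
    rw [h2, M.map_id]
    rfl
  -- the relations
  let Jt : Type v := Σ A : 𝔞, {g : u.obj A ⟶ ∐ fun i => u.obj (f₀ i) // π A g = 0}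
  let f₁ : Jt → 𝔞 := Sigma.fst
  let d : (∐ fun j : Jt => u.obj (f₁ j)) ⟶ ∐ fun i => u.obj (f₀ i) :=
    Sigma.desc fun j => j.2.1
  have hd : ∀ j : Jt, Sigma.ι (fun j : Jt => u.obj (f₁ j)) j ≫ d = j.2.1 :=
    fun j => colimit.ι_desc _ _
  let C0 : 𝒞 := cokernel d
  let c : (∐ fun i => u.obj (f₀ i)) ⟶ C0 := cokernel.π d
  have π_d : ∀ (B : 𝔞) (g' : u.obj B ⟶ ∐ fun j : Jt => u.obj (f₁ j)),
      π B (g' ≫ d) = 0 := by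
    intro B g'
    haveI := hfp B
    obtain ⟨z, rfl⟩ := theta_surjective u f₁ B g'
    induction z using DirectSum.induction_on with
    | zero => simp only [map_zero, Limits.zero_comp]
    | of j m =>
      rw [theta_of, Category.assoc, hd j, π_nat, j.2.2]
      exact map_zero _
    | add x y hx hy =>
      rw [map_add, Preadditive.add_comp, map_add, hx, hy, add_zero]
  have ker_iff : ∀ (B : 𝔞) (g : u.obj B ⟶ ∐ fun i => u.obj (f₀ i)),
      g ≫ c = 0 ↔ π B g = 0 := by
    intro B g
    constructor
    · intro hg
      haveI := hproj B
      let w : u.obj B ⟶ Abelian.image d := kernel.lift (cokernel.π d) g hg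
      have h1 : Projective.factorThru w (Abelian.factorThruImage d) ≫
          Abelian.factorThruImage d = w := Projective.factorThru_comp _ _
      have h2 : Projective.factorThru w (Abelian.factorThruImage d) ≫ d = g := by
        have h3 : Projective.factorThru w (Abelian.factorThruImage d) ≫
            (Abelian.factorThruImage d ≫ Abelian.image.ι d) = g := by
          rw [← Category.assoc, h1]
          exact kernel.lift_ι (cokernel.π d) g hg
        rw [Abelian.image.fac d] at h3
        exact h3
      rw [← h2]
      exact π_d B _
    · intro hg
      have h1 : g = Sigma.ι (fun j : Jt => u.obj (f₁ j)) ⟨B, g, hg⟩ ≫ d :=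
        (hd ⟨B, g, hg⟩).symm
      rw [h1, Category.assoc, cokernel.condition, Limits.comp_zero]
  -- the lifts along c
  have lifts : ∀ (B : 𝔞) (h : u.obj B ⟶ C0), ∃ g : u.obj B ⟶ ∐ fun i => u.obj (f₀ i),
      g ≫ c = h := by
    intro B h
    haveI := hproj B
    exact ⟨Projective.factorThru h c, Projective.factorThru_comp _ _⟩
  choose lft hlft using lifts
  have indep : ∀ (B : 𝔞) (g : u.obj B ⟶ ∐ fun i => u.obj (f₀ i)) (h : u.obj B ⟶ C0),
      g ≫ c = h → π B g = π B (lft B h) := by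
    intro B g h hg
    have h1 : (g - lft B h) ≫ c = 0 := by
      rw [Preadditive.sub_comp, hg, hlft, sub_self]
    have h2 := (ker_iff B _).mp h1
    rw [map_sub] at h2
    exact sub_eq_zero.mp h2
  let ψfun : ∀ B : 𝔞, (u.obj B ⟶ C0) → M.obj (op B) := fun B h => π B (lft B h)
  have ψadd : ∀ (B : 𝔞) (h h' : u.obj B ⟶ C0),
      ψfun B (h + h') = ψfun B h + ψfun B h' := by
    intro B h h'
    have h1 : (lft B h + lft B h') ≫ c = h + h' := by
      rw [Preadditive.add_comp, hlft, hlft]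
    have h2 := indep B _ _ h1
    rw [map_add] at h2
    exact h2.symm
  have ψnat : ∀ {B' B : 𝔞} (n : B' ⟶ B) (h : u.obj B ⟶ C0),
      ψfun B' (u.map n ≫ h) = M.map n.op (ψfun B h) := by
    intro B' B n h
    have h1 : (u.map n ≫ lft B h) ≫ c = u.map n ≫ h := by
      rw [Category.assoc, hlft]
    have h2 := indep B' _ _ h1
    rw [π_nat] at h2
    exact h2.symm
  have ψinj : ∀ (B : 𝔞), Function.Injective (ψfun B) := by
    intro B h h' he
    have h1 : ψfun B (h - h') = 0 := by
      have h2 : (lft B h - lft B h') ≫ c = h - h' := by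
        rw [Preadditive.sub_comp, hlft, hlft]
      have h3 := indep B _ _ h2
      rw [map_sub] at h3
      show π B (lft B (h - h')) = 0
      have he' : π B (lft B h) = π B (lft B h') := he
      rw [← h3, he', sub_self]
    have h4 : lft B (h - h') ≫ c = 0 := (ker_iff B _).mpr h1
    have h5 : h - h' = 0 := by rw [← hlft B (h - h'), h4]
    rw [← sub_eq_zero]
    exact h5
  have ψsurj : ∀ (B : 𝔞), Function.Surjective (ψfun B) := by
    intro B x
    obtain ⟨g, hg⟩ := π_surj B x
    exact ⟨g ≫ c, by rw [show ψfun B (g ≫ c) = π B (lft B (g ≫ c)) from rfl,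
      ← indep B g _ rfl, hg]⟩
  let ψe : ∀ B : 𝔞, (u.obj B ⟶ C0) ≃+ M.obj (op B) := fun B =>
    AddEquiv.ofBijective (AddMonoidHom.mk' (ψfun B) (ψadd B)) ⟨ψinj B, ψsurj B⟩
  let N : ((restrictedYoneda u).obj C0).obj ≅ M :=
    NatIso.ofComponents (fun X => (ψe X.unop).toAddCommGrpIso) (by
      intro X Y n
      refine AddCommGrpCat.ext fun h => ?_
      show ψfun Y.unop (u.map n.unop ≫ h) = M.map n (ψfun X.unop h)
      exact ψnat n.unop h)
  exact ⟨C0, ⟨ObjectProperty.isoMk _ N⟩⟩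

end Full

end Statement0Aux

theorem statement0 {𝔞 : Type v} [SmallCategory 𝔞] [Preadditive 𝔞]
    {𝒞 : Type u} [Category.{v} 𝒞] [Abelian 𝒞] [HasColimits 𝒞] [AB5 𝒞] [HasSeparator 𝒞]
    (u : 𝔞 ⥤ 𝒞) [u.Additive]
    (hfull : u.Full) (hfaithful : u.Faithful)
    (hproj : ∀ A : 𝔞, Projective (u.obj A))
    (hfp : ∀ A : 𝔞, PreservesFilteredColimitsOfSize.{v, v} (coyoneda.obj (op (u.obj A))))
    (hgen : ∀ C : 𝒞, ∃ (ι : Type v) (f : ι → 𝔞) (p : (∐ fun i => u.obj (f i)) ⟶ C), Epi p) :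
    (restrictedYoneda u).IsEquivalence := by
  haveI := hfull
  haveI := hfaithful
  exact {
    faithful := Statement0Aux.ry_faithful u hgen
    full := Statement0Aux.ry_full u hproj hfp hgen
    essSurj := Statement0Aux.ry_essSurj u hproj hfp }
end

section
/- Let 𝔞 be a small preadditive category, 𝒞 a Grothendieck category, and u : 𝔞 → 𝒞 an additive functor. If the restricted Yoneda functor 𝒞 → Mod(𝔞), sending C to the module A ↦ Hom_𝒞(u(A), C), is an equivalence of categories, then u is fully faithful and the objects u(A), for A ∈ 𝔞, are projective, finitely presented, and form a generating family in 𝒞. -/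
/-!
Statement 1: Let 𝔞 be a small preadditive category, 𝒞 a Grothendieck category, and
`u : 𝔞 ⥤ 𝒞` an additive functor.  If the restricted Yoneda functor `𝒞 ⥤ Mod 𝔞`,
`C ↦ (A ↦ Hom(u A, C))`, is an equivalence, then `u` is fully faithful and the
objects `u A` are projective, finitely presented and form a generating family in 𝒞.
-/

open CategoryTheory Limits Opposite

universe v u

/-! ### Auxiliary results -/

/-- The additive Yoneda lemma: for an additive functor `M : 𝔞ᵒᵖ ⥤ Ab`, natural
transformations `𝔞(-, A) ⟶ M` correspond to elements of `M A`. -/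
noncomputable def addYonedaEquiv' {𝔞 : Type v} [SmallCategory 𝔞] [Preadditive 𝔞]
    (A : 𝔞) (M : 𝔞ᵒᵖ ⥤ AddCommGrpCat.{v}) [M.Additive] :
    (preadditiveYoneda.obj A ⟶ M) ≃ M.obj (op A) where
  toFun η := η.app (op A) (𝟙 A)
  invFun m :=
    { app := fun A' => AddCommGrpCat.ofHom <| AddMonoidHom.mk' (fun g => M.map g.op m) (fun (g h : A'.unop ⟶ A) => by
        show M.map (g + h).op m = _
        rw [op_add, M.map_add]; rfl)
      naturality := fun A' A'' h => by
        ext (g : A'.unop ⟶ A)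
        change M.map (h.unop ≫ g).op m = M.map h (M.map g.op m)
        rw [op_comp, M.map_comp]; rfl }
  left_inv η := by
    ext A' (g : A'.unop ⟶ A)
    change M.map g.op (η.app (op A) (𝟙 A)) = η.app A' g
    have h2 : η.app A' (g ≫ 𝟙 A) = M.map g.op (η.app (op A) (𝟙 A)) :=
      ConcreteCategory.congr_hom (η.naturality g.op) (𝟙 A)
    rw [Category.comp_id] at h2
    exact h2.symm
  right_inv m := by change M.map (𝟙 A).op m = m; simp

/-- A functor receiving a pointwise-epi natural transformation from an additive functor
is additive. -/
lemma additive_of_pointwise_epi {𝔞 : Type v} [SmallCategory 𝔞] [Preadditive 𝔞]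
    {N L : 𝔞ᵒᵖ ⥤ AddCommGrpCat.{v}} [N.Additive]
    (c : N ⟶ L) (hc : ∀ X, Epi (c.app X)) : L.Additive := by
  constructor
  intro X Y f g
  haveI := hc X
  rw [← cancel_epi (c.app X), ← c.naturality, N.map_add, Preadditive.add_comp,
    Preadditive.comp_add, c.naturality, c.naturality]

/-- A pointwise colimit of additive functors is additive. -/
lemma colimit_additive {𝔞 : Type v} [SmallCategory 𝔞] [Preadditive 𝔞]
    {J : Type v} [Category.{v} J] (H : J ⥤ (𝔞ᵒᵖ ⥤ AddCommGrpCat.{v}))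
    [∀ j, (H.obj j).Additive] : (colimit H).Additive := by
  constructor
  intro X Y f g
  apply (isColimitOfPreserves ((evaluation 𝔞ᵒᵖ AddCommGrpCat.{v}).obj X)
    (colimit.isColimit H)).hom_ext
  intro j
  dsimp
  rw [← NatTrans.naturality, (H.obj j).map_add, Preadditive.add_comp, Preadditive.comp_add,
    NatTrans.naturality, NatTrans.naturality]

/-- Epimorphisms in the module category are pointwise surjective. -/
lemma moduleCategory_epi_surjective {𝔞 : Type v} [SmallCategory 𝔞] [Preadditive 𝔞]
    {M N : ModuleCategory 𝔞} (e : M ⟶ N) [Epi e] (X : 𝔞ᵒᵖ) :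
    Function.Surjective (((ObjectProperty.ι _).map e).app X) := by
  set e' : M.obj ⟶ N.obj := (ObjectProperty.ι _).map e with he'
  haveI : N.obj.Additive := N.property
  haveI : (cokernel e').Additive :=
    additive_of_pointwise_epi (cokernel.π e') (fun X => inferInstance)
  let LD : ModuleCategory 𝔞 := ⟨cokernel e', this⟩
  have h0 : cokernel.π e' = 0 := by
    have he : e ≫ (show N ⟶ LD from ObjectProperty.homMk (cokernel.π e')) = e ≫ (show N ⟶ LD from ObjectProperty.homMk 0) := by
      apply (ObjectProperty.ι _).map_injective
      show e' ≫ cokernel.π e' = e' ≫ 0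
      simp [cokernel.condition]
    exact (ObjectProperty.ι _).congr_map ((cancel_epi e).mp he)
  haveI : Epi e' := Abelian.epi_of_cokernel_π_eq_zero _ h0
  haveI : Epi (e'.app X) := inferInstance
  exact (AddCommGrpCat.epi_iff_surjective _).mp this

section
variable {𝔞 : Type v} [SmallCategory 𝔞] [Preadditive 𝔞]
  {𝒞 : Type u} [Category.{v} 𝒞] [Preadditive 𝒞] (u : 𝔞 ⥤ 𝒞) [u.Additive]

/-- The additive Yoneda embedding into the module category. -/
noncomputable def YD : 𝔞 ⥤ ModuleCategory 𝔞 :=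
  ObjectProperty.lift _ preadditiveYoneda (fun _ => inferInstance)

/-- The module morphism `𝔞(-, A) ⟶ Hom(u -, X)` induced by `k : u A ⟶ X`. -/
noncomputable def ryHom (A : 𝔞) {X : 𝒞} (k : u.obj A ⟶ X) :
    (YD (𝔞 := 𝔞)).obj A ⟶ (restrictedYoneda u).obj X :=
  letI : (((restrictedYoneda u).obj X).obj).Additive := ((restrictedYoneda u).obj X).property
  ObjectProperty.homMk (show (preadditiveYoneda.obj A ⟶ ((restrictedYoneda u).obj X).obj) from
    (addYonedaEquiv' A (((restrictedYoneda u).obj X).obj)).symm k)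

lemma ryHom_app (A : 𝔞) {X : 𝒞} (k : u.obj A ⟶ X) (A' : 𝔞) (g : A' ⟶ A) :
    ((ObjectProperty.ι _).map (ryHom u A k)).app (op A') g = u.map g ≫ k := rfl

lemma ryHom_comp (A : 𝔞) {X X' : 𝒞} (k : u.obj A ⟶ X) (h : X ⟶ X') :
    ryHom u A (k ≫ h) = ryHom u A k ≫ (restrictedYoneda u).map h := by
  apply (ObjectProperty.ι _).map_injective
  ext A' (g : A'.unop ⟶ A)
  change u.map g ≫ (k ≫ h) = (u.map g ≫ k) ≫ h
  simp

lemma ryHom_eq (A : 𝔞) {X : 𝒞} (η : (YD (𝔞 := 𝔞)).obj A ⟶ (restrictedYoneda u).obj X) :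
    ryHom u A (((ObjectProperty.ι _).map η).app (op A) (𝟙 A)) = η := by
  letI : (((restrictedYoneda u).obj X).obj).Additive := ((restrictedYoneda u).obj X).property
  exact ObjectProperty.hom_ext _ ((addYonedaEquiv' A (((restrictedYoneda u).obj X).obj)).left_inv η.hom)

variable [(restrictedYoneda u).IsEquivalence]

lemma ryHom_isIso (A : 𝔞) : IsIso (ryHom u A (𝟙 (u.obj A))) := by
  let C := (restrictedYoneda u).objPreimage ((YD (𝔞 := 𝔞)).obj A)
  let ε : (restrictedYoneda u).obj C ≅ (YD (𝔞 := 𝔞)).obj A :=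
    (restrictedYoneda u).objObjPreimageIso _
  let f : u.obj A ⟶ C := ((ObjectProperty.ι _).map ε.inv).app (op A) (𝟙 A)
  have K1 : ryHom u A (𝟙 (u.obj A)) ≫ (restrictedYoneda u).map f = ε.inv := by
    rw [← ryHom_comp, Category.id_comp]
    exact ryHom_eq u A ε.inv
  have hfiso : IsIso f := by
    apply isIso_of_coyoneda_map_bijective
    intro X
    have hco : (fun h : C ⟶ X => f ≫ h)
        = (fun η : (YD (𝔞 := 𝔞)).obj A ⟶ (restrictedYoneda u).obj X =>
            ((ObjectProperty.ι _).map η).app (op A) (𝟙 A))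
          ∘ ((fun t : (restrictedYoneda u).obj C ⟶ (restrictedYoneda u).obj X => ε.inv ≫ t)
            ∘ (fun h : C ⟶ X => (restrictedYoneda u).map h)) := by
      funext h; rfl
    rw [hco]
    letI : (((restrictedYoneda u).obj X).obj).Additive := ((restrictedYoneda u).obj X).property
    refine Function.Bijective.comp
      (show Function.Bijective (fun η : (YD (𝔞 := 𝔞)).obj A ⟶ (restrictedYoneda u).obj X =>
          ((ObjectProperty.ι _).map η).app (op A) (𝟙 A)) from
        (((ObjectProperty.fullyFaithfulι (fun F : 𝔞ᵒᵖ ⥤ AddCommGrpCat.{v} => F.Additive)).homEquiv (X := (YD (𝔞 := 𝔞)).obj A) (Y := (restrictedYoneda u).obj X)).trans (addYonedaEquiv' A (((restrictedYoneda u).obj X).obj))).bijective)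
      (Function.Bijective.comp ?_
        ⟨(restrictedYoneda u).map_injective, (restrictedYoneda u).map_surjective⟩)
    constructor
    · intro a b hab
      exact (cancel_epi ε.inv).mp hab
    · intro t
      exact ⟨ε.hom ≫ t, by simp⟩
  haveI : IsIso ((restrictedYoneda u).map f) := inferInstance
  haveI : IsIso (ryHom u A (𝟙 (u.obj A)) ≫ (restrictedYoneda u).map f) := by
    rw [K1]; infer_instance
  exact IsIso.of_isIso_comp_right _ ((restrictedYoneda u).map f)

lemma u_map_bijective (A B : 𝔞) :
    Function.Bijective (u.map : (A ⟶ B) → (u.obj A ⟶ u.obj B)) := by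
  haveI := ryHom_isIso u B
  haveI : IsIso ((ObjectProperty.ι _).map (ryHom u B (𝟙 (u.obj B)))) :=
    Functor.map_isIso _ _
  haveI : IsIso (((ObjectProperty.ι _).map (ryHom u B (𝟙 (u.obj B)))).app (op A)) :=
    inferInstance
  have hb := ConcreteCategory.bijective_of_isIso
    (((ObjectProperty.ι _).map (ryHom u B (𝟙 (u.obj B)))).app (op A))
  have hb' : Function.Bijective (fun g : A ⟶ B => u.map g ≫ 𝟙 (u.obj B)) := hb
  have : (fun g : A ⟶ B => u.map g ≫ 𝟙 (u.obj B)) = fun g => u.map g := by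
    funext g; simp
  rwa [this] at hb'

/-- The coyoneda functor of `u A` factors through the restricted Yoneda functor. -/
noncomputable def coyonedaIsoAux (A : 𝔞) :
    restrictedYoneda u ⋙ ObjectProperty.ι _ ⋙
      (evaluation 𝔞ᵒᵖ AddCommGrpCat.{v}).obj (op A) ⋙ forget AddCommGrpCat ≅
    coyoneda.obj (op (u.obj A)) :=
  NatIso.ofComponents (fun X => Iso.refl _) (fun f => rfl)

end

set_option maxHeartbeats 1000000 in
set_option synthInstance.maxHeartbeats 400000 in
theorem statement1 {𝔞 : Type v} [SmallCategory 𝔞] [Preadditive 𝔞]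
    {𝒞 : Type u} [Category.{v} 𝒞] [Abelian 𝒞] [HasColimits 𝒞] [AB5 𝒞] [HasSeparator 𝒞]
    (u : 𝔞 ⥤ 𝒞) [u.Additive]
    (heq : (restrictedYoneda u).IsEquivalence) :
    u.Full ∧ u.Faithful ∧
    (∀ A : 𝔞, Projective (u.obj A)) ∧
    (∀ A : 𝔞, PreservesFilteredColimitsOfSize.{v, v} (coyoneda.obj (op (u.obj A)))) ∧
    (∀ C : 𝒞, ∃ (ι : Type v) (f : ι → 𝔞) (p : (∐ fun i => u.obj (f i)) ⟶ C), Epi p) := by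
  haveI := heq
  refine ⟨⟨fun {A B} => (u_map_bijective u A B).2⟩,
    ⟨fun {A B} f g h => (u_map_bijective u A B).1 h⟩, ?_, ?_, ?_⟩
  · -- projectivity
    intro A
    refine ⟨?_⟩
    intro E X f e he
    haveI : Epi ((restrictedYoneda u).map e) := (restrictedYoneda u).map_epi e
    obtain ⟨k, hk⟩ := moduleCategory_epi_surjective ((restrictedYoneda u).map e) (op A) f
    exact ⟨k, hk⟩
  · -- finite presentation
    intro A
    refine ⟨fun J _ _ => ?_⟩
    haveI i1 : PreservesColimitsOfShape J (restrictedYoneda u) := inferInstance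
    haveI i2 : PreservesColimitsOfShape J (ObjectProperty.ι
        (fun F : 𝔞ᵒᵖ ⥤ AddCommGrpCat.{v} => F.Additive)) := by
      constructor
      intro K
      haveI : ∀ j, ((K ⋙ ObjectProperty.ι _).obj j).Additive :=
        fun j => (K.obj j).property
      haveI hadd : (colimit (K ⋙ ObjectProperty.ι
          (fun F : 𝔞ᵒᵖ ⥤ AddCommGrpCat.{v} => F.Additive))).Additive := colimit_additive _
      haveI : CreatesColimit K (ObjectProperty.ι
          (fun F : 𝔞ᵒᵖ ⥤ AddCommGrpCat.{v} => F.Additive)) :=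
        createsColimitOfFullyFaithfulOfIso
          (⟨colimit (K ⋙ ObjectProperty.ι _), hadd⟩ : ModuleCategory 𝔞) (Iso.refl _)
      haveI : HasColimitsOfShape J (ModuleCategory 𝔞) :=
        Adjunction.hasColimitsOfShape_of_equivalence ((restrictedYoneda u).asEquivalence.inverse)
      exact preservesColimit_of_createsColimit_and_hasColimit _ _
    haveI i4 : PreservesColimitsOfShape J (forget AddCommGrpCat.{v}) :=
      AddCommGrpCat.FilteredColimits.forget_preservesFilteredColimits.preserves_filtered_colimits J
    exact preservesColimitsOfShape_of_natIso (coyonedaIsoAux u A)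
  · -- generation
    intro C
    refine ⟨Σ A : 𝔞, (u.obj A ⟶ C), fun i => i.1, Sigma.desc (fun i => i.2), ?_⟩
    set p : (∐ fun i : Σ A : 𝔞, (u.obj A ⟶ C) => u.obj i.1) ⟶ C :=
      Sigma.desc (fun i => i.2) with hp
    have hsurj : ∀ X : 𝔞ᵒᵖ, Function.Surjective
        (((ObjectProperty.ι _).map ((restrictedYoneda u).map p)).app X) := by
      intro X k
      refine ⟨Sigma.ι (fun i : Σ A : 𝔞, (u.obj A ⟶ C) => u.obj i.1) ⟨X.unop, k⟩, ?_⟩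
      show Sigma.ι (fun i : Σ A : 𝔞, (u.obj A ⟶ C) => u.obj i.1) ⟨X.unop, k⟩ ≫ p = k
      simp [hp]; rfl
    haveI : ∀ X, Epi ((((ObjectProperty.ι _).map ((restrictedYoneda u).map p))).app X) :=
      fun X => (AddCommGrpCat.epi_iff_surjective _).mpr (hsurj X)
    haveI : Epi ((ObjectProperty.ι
        (fun F : 𝔞ᵒᵖ ⥤ AddCommGrpCat.{v} => F.Additive)).map ((restrictedYoneda u).map p)) :=
      NatTrans.epi_of_epi_app _
    have h2 : Epi ((restrictedYoneda u).map p) :=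
      (ObjectProperty.ι _).epi_of_epi_map this
    exact (restrictedYoneda u).epi_of_epi_map h2
end

section
/- Let p : ℬ → 𝒜 be a morphism of R-linear fibered categories on a site (𝒰, 𝒯) which satisfies (G) and (F) and locally reflects isomorphisms. If 𝒜 is algebroid, then so is ℬ. -/
open CategoryTheory Limits

universe w v₂ u₂ v₁ u₁ u₀

/-- A covering system `𝒯` on a category `𝒰`: for each object `U` a collection of
coverings (families of morphisms into `U`, encoded as presieves), containing the
identity families and stable under composition (transitivity). -/
structure CoveringSystem (𝒰 : Type u₁) [Category.{v₁} 𝒰] where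
  covers : ∀ U : 𝒰, Set (Presieve U)
  id_mem : ∀ U : 𝒰, Presieve.singleton (𝟙 U) ∈ covers U
  bind_mem : ∀ ⦃U : 𝒰⦄ (S : Presieve U), S ∈ covers U →
    ∀ (T : ∀ ⦃V : 𝒰⦄ ⦃f : V ⟶ U⦄, S f → Presieve V),
      (∀ ⦃V : 𝒰⦄ ⦃f : V ⟶ U⦄ (h : S f), T h ∈ covers V) → S.bind T ∈ covers U

/-- An `R`-linear fibered category on a base category `𝒰`, presented as a pseudofunctor:
`R`-linear categories `Fib U`, `R`-linear restriction functors `res i : Fib U ⥤ Fib V`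
for `i : V ⟶ U`, and natural isomorphisms `τ` satisfying the cocycle condition. -/
structure LinearFibered (R : Type u₀) [CommRing R] (𝒰 : Type u₁) [Category.{v₁} 𝒰] where
  Fib : 𝒰 → Type u₂
  [cat : ∀ U, Category.{v₂} (Fib U)]
  [preadd : ∀ U, Preadditive (Fib U)]
  [lin : ∀ U, CategoryTheory.Linear R (Fib U)]
  res : ∀ {V U : 𝒰}, (V ⟶ U) → (Fib U ⥤ Fib V)
  [resAdditive : ∀ {V U : 𝒰} (i : V ⟶ U), (res i).Additive]
  [resLinear : ∀ {V U : 𝒰} (i : V ⟶ U), (res i).Linear R]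
  τ : ∀ {W V U : 𝒰} (j : W ⟶ V) (i : V ⟶ U), res (j ≫ i) ≅ res i ⋙ res j
  cocycle : ∀ {Z W V U : 𝒰} (k : Z ⟶ W) (j : W ⟶ V) (i : V ⟶ U),
    (τ (k ≫ j) i).hom ≫ Functor.whiskerLeft (res i) (τ k j).hom =
      eqToHom (by rw [Category.assoc]) ≫ (τ k (j ≫ i)).hom ≫
        Functor.whiskerRight (τ j i).hom (res k)

attribute [instance] LinearFibered.cat LinearFibered.preadd LinearFibered.lin
  LinearFibered.resAdditive LinearFibered.resLinear

variable {R : Type u₀} [CommRing R] {𝒰 : Type u₁} [Category.{v₁} 𝒰]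

/-- A morphism `p : ℬ ⟶ 𝒜` of `R`-linear fibered categories: `R`-linear functors
`p.app U : ℬ(U) ⥤ 𝒜(U)` together with natural isomorphisms `p.comm i` commuting with
the restriction functors, compatibly with the `τ`'s. -/
structure FiberedMor (ℬ 𝒜 : LinearFibered.{v₂, u₂} R 𝒰) where
  app : ∀ U : 𝒰, ℬ.Fib U ⥤ 𝒜.Fib U
  [appAdditive : ∀ U : 𝒰, (app U).Additive]
  [appLinear : ∀ U : 𝒰, (app U).Linear R]
  comm : ∀ {V U : 𝒰} (i : V ⟶ U), ℬ.res i ⋙ app V ≅ app U ⋙ 𝒜.res i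
  comm_comp : ∀ {W V U : 𝒰} (j : W ⟶ V) (i : V ⟶ U),
    Functor.whiskerRight (ℬ.τ j i).hom (app W) ≫ Functor.whiskerLeft (ℬ.res i) (comm j).hom ≫
        Functor.whiskerRight (comm i).hom (𝒜.res j) =
      (comm (j ≫ i)).hom ≫ Functor.whiskerLeft (app U) (𝒜.τ j i).hom

attribute [instance] FiberedMor.appAdditive FiberedMor.appLinear

namespace FiberedMor

variable {ℬ 𝒜 : LinearFibered.{v₂, u₂} R 𝒰} (p : FiberedMor ℬ 𝒜)

/-- The canonical identification `p(B|_V|_W) ≅ p(B)|_V|_W`. -/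
def ident {U V W : 𝒰} (i : V ⟶ U) (g : W ⟶ V) (B : ℬ.Fib U) :
    (p.app W).obj ((ℬ.res g).obj ((ℬ.res i).obj B)) ≅
      (𝒜.res g).obj ((𝒜.res i).obj ((p.app U).obj B)) :=
  (p.comm g).app ((ℬ.res i).obj B) ≪≫ (𝒜.res g).mapIso ((p.comm i).app B)

variable (𝒯 : CoveringSystem 𝒰)

/-- Condition (G): `p` is locally surjective on objects. -/
def SatisfiesG : Prop :=
  ∀ (U : 𝒰) (A : 𝒜.Fib U), ∃ S ∈ 𝒯.covers U, ∀ ⦃V : 𝒰⦄ ⦃f : V ⟶ U⦄, S f →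
    ∃ B : ℬ.Fib V, Nonempty ((p.app V).obj B ≅ (𝒜.res f).obj A)

/-- Condition (F): for `B, B' ∈ ℬ(U)` and a morphism `a : p(B)|_V ⟶ p(B')|_V` in `𝒜(V)`,
locally on a covering of `V` the morphism `a` comes from `ℬ` (under the canonical
identifications). -/
def SatisfiesF : Prop :=
  ∀ ⦃U V : 𝒰⦄ (B B' : ℬ.Fib U) (i : V ⟶ U)
    (a : (𝒜.res i).obj ((p.app U).obj B) ⟶ (𝒜.res i).obj ((p.app U).obj B')),
    ∃ S ∈ 𝒯.covers V, ∀ ⦃W : 𝒰⦄ ⦃g : W ⟶ V⦄, S g →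
      ∃ b : (ℬ.res g).obj ((ℬ.res i).obj B) ⟶ (ℬ.res g).obj ((ℬ.res i).obj B'),
        (p.app W).map b ≫ (p.ident i g B').hom = (p.ident i g B).hom ≫ (𝒜.res g).map a

/-- Condition (FF): for `B, B' ∈ ℬ(U)` and `b : B|_V ⟶ B'|_V` with `p(b) = 0`, the
morphism `b` vanishes locally on a covering of `V`. -/
def SatisfiesFF : Prop :=
  ∀ ⦃U V : 𝒰⦄ (B B' : ℬ.Fib U) (i : V ⟶ U)
    (b : (ℬ.res i).obj B ⟶ (ℬ.res i).obj B'), (p.app V).map b = 0 →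
    ∃ S ∈ 𝒯.covers V, ∀ ⦃W : 𝒰⦄ ⦃g : W ⟶ V⦄, S g → (ℬ.res g).map b = 0

/-- `p` locally reflects isomorphisms. -/
def LocallyReflectsIsos : Prop :=
  ∀ ⦃U : 𝒰⦄ ⦃B B' : ℬ.Fib U⦄ (b : B ⟶ B'), IsIso ((p.app U).map b) →
    ∃ S ∈ 𝒯.covers U, ∀ ⦃V : 𝒰⦄ ⦃f : V ⟶ U⦄, S f → IsIso ((ℬ.res f).map b)

end FiberedMor

/-- An `R`-linear fibered category `𝒜` on a site `(𝒰, 𝒯)` is algebroid if (1) every `U`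
admits a covering with nonempty fibers and (2) any two objects of a fiber are locally
isomorphic. -/
def LinearFibered.IsAlgebroid (𝒜 : LinearFibered.{v₂, u₂} R 𝒰)
    (𝒯 : CoveringSystem 𝒰) : Prop :=
  (∀ U : 𝒰, ∃ S ∈ 𝒯.covers U, ∀ ⦃V : 𝒰⦄ ⦃f : V ⟶ U⦄, S f → Nonempty (𝒜.Fib V)) ∧
  (∀ (U : 𝒰) (A A' : 𝒜.Fib U), ∃ S ∈ 𝒯.covers U, ∀ ⦃V : 𝒰⦄ ⦃f : V ⟶ U⦄, S f →
    Nonempty ((𝒜.res f).obj A ≅ (𝒜.res f).obj A'))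

/-!
Statement 5: if a morphism `p : ℬ ⟶ 𝒜` of `R`-linear fibered categories on a site
`(𝒰, 𝒯)` satisfies (G) and (F) and locally reflects isomorphisms, and if `𝒜` is
algebroid, then so is `ℬ`.
-/

theorem statement5 {R : Type u₀} [CommRing R] {𝒰 : Type u₁} [Category.{v₁} 𝒰]
    (𝒯 : CoveringSystem 𝒰) {ℬ 𝒜 : LinearFibered.{v₂, u₂} R 𝒰} (p : FiberedMor ℬ 𝒜)
    (hG : p.SatisfiesG 𝒯) (hF : p.SatisfiesF 𝒯) (hloc : p.LocallyReflectsIsos 𝒯)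
    (h𝒜 : 𝒜.IsAlgebroid 𝒯) :
    ℬ.IsAlgebroid 𝒯 := by
  classical
  constructor
  · -- local nonemptiness of fibers
    intro U
    obtain ⟨S, hS, hne⟩ := h𝒜.1 U
    choose T hT hTB using fun (V : 𝒰) (f : V ⟶ U) (hf : S f) =>
      hG V ((hne hf).some)
    refine ⟨S.bind (fun V f hf => T V f hf),
      𝒯.bind_mem S hS _ (fun V f hf => hT V f hf), ?_⟩
    rintro W f' ⟨V, g, f, hf, hg, rfl⟩
    obtain ⟨B, -⟩ := hTB V f hf hg
    exact ⟨B⟩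
  · -- local isomorphism of objects
    intro U B B'
    obtain ⟨S, hS, ha⟩ := h𝒜.2 U ((p.app U).obj B) ((p.app U).obj B')
    choose T hT b hb using fun (V : 𝒰) (f : V ⟶ U) (hf : S f) =>
      hF B B' f ((ha hf).some.hom)
    have hiso : ∀ (V : 𝒰) (f : V ⟶ U) (hf : S f) (W : 𝒰) (g : W ⟶ V)
        (hg : T V f hf g), IsIso ((p.app W).map (b V f hf hg)) := by
      intro V f hf W g hg
      have h := hb V f hf hg
      have : (p.app W).map (b V f hf hg) =
          ((p.ident f g B).hom ≫ (𝒜.res g).map ((ha hf).some.hom)) ≫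
            (p.ident f g B').inv := by
        rw [← h, Category.assoc, Iso.hom_inv_id, Category.comp_id]
      rw [this]
      infer_instance
    choose T' hT' hT'iso using fun (V : 𝒰) (f : V ⟶ U) (hf : S f) (W : 𝒰)
      (g : W ⟶ V) (hg : T V f hf g) => hloc (b V f hf hg) (hiso V f hf W g hg)
    refine ⟨S.bind (fun V f hf =>
        (T V f hf).bind (fun W g hg => T' V f hf W g hg)),
      𝒯.bind_mem S hS _ (fun V f hf =>
        𝒯.bind_mem (T V f hf) (hT V f hf) _ (fun W g hg => hT' V f hf W g hg)),
      ?_⟩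
    rintro X k ⟨V, g', f, hf, ⟨W, h', g, hg, hh, rfl⟩, rfl⟩
    have : IsIso ((ℬ.res h').map (b V f hf hg)) := hT'iso V f hf W g hg hh
    exact ⟨(ℬ.τ (h' ≫ g) f).app B ≪≫ (ℬ.τ h' g).app ((ℬ.res f).obj B) ≪≫
      asIso ((ℬ.res h').map (b V f hf hg)) ≪≫
      ((ℬ.τ h' g).app ((ℬ.res f).obj B')).symm ≪≫
      ((ℬ.τ (h' ≫ g) f).app B').symm⟩
end

section
/- Let p : ℬ → 𝒜 be a morphism of R-linear fibered categories on a site (𝒰, 𝒯) which satisfies (G), (F) and (FF). If 𝒜 is algebroid, then so is ℬ. -/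
open CategoryTheory Limits

universe w v₂ u₂ v₁ u₁ u₀

variable {R : Type u₀} [CommRing R] {𝒰 : Type u₁} [Category.{v₁} 𝒰]

/-- Auxiliary: propagate a local property along a bind of coverings. -/
lemma CoveringSystem.exists_bind {𝒰 : Type u₁} [Category.{v₁} 𝒰]
    (𝒯 : CoveringSystem 𝒰) {U : 𝒰}
    (P : ∀ ⦃V : 𝒰⦄, (V ⟶ U) → Prop) {S : Presieve U} (hS : S ∈ 𝒯.covers U)
    (h : ∀ ⦃V : 𝒰⦄ ⦃f : V ⟶ U⦄, S f → ∃ T ∈ 𝒯.covers V,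
      ∀ ⦃W : 𝒰⦄ ⦃g : W ⟶ V⦄, T g → P (g ≫ f)) :
    ∃ S' ∈ 𝒯.covers U, ∀ ⦃V : 𝒰⦄ ⦃f : V ⟶ U⦄, S' f → P f := by
  choose T hT hP using h
  refine ⟨S.bind T, 𝒯.bind_mem S hS T hT, ?_⟩
  rintro V f ⟨Y, g, h', hS', hT', rfl⟩
  exact hP hS' hT'

namespace FiberedMor

section Aux

variable {ℬ 𝒜 : LinearFibered.{v₂, u₂} R 𝒰} (p : FiberedMor ℬ 𝒜)

lemma map_τ_ident {U V W : 𝒰} (f : V ⟶ U) (g : W ⟶ V) (B : ℬ.Fib U) :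
    (p.app W).map ((ℬ.τ g f).hom.app B) ≫ (p.ident f g B).hom =
      (p.comm (g ≫ f)).hom.app B ≫ (𝒜.τ g f).hom.app ((p.app U).obj B) := by
  have h := congr_arg (fun η => η.app B) (p.comm_comp g f)
  simpa [FiberedMor.ident] using h

lemma map_τ_hom {U V W : 𝒰} (f : V ⟶ U) (g : W ⟶ V) (B : ℬ.Fib U) :
    (p.app W).map ((ℬ.τ g f).hom.app B) =
      (p.comm (g ≫ f)).hom.app B ≫ (𝒜.τ g f).hom.app ((p.app U).obj B) ≫
        (p.ident f g B).inv := by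
  rw [← Category.assoc, ← map_τ_ident, Category.assoc, Iso.hom_inv_id, Category.comp_id]

lemma map_τ_inv {U V W : 𝒰} (f : V ⟶ U) (g : W ⟶ V) (B : ℬ.Fib U) :
    (p.app W).map ((ℬ.τ g f).inv.app B) =
      (p.ident f g B).hom ≫ (𝒜.τ g f).inv.app ((p.app U).obj B) ≫
        (p.comm (g ≫ f)).inv.app B := by
  rw [← cancel_epi ((p.app W).map ((ℬ.τ g f).hom.app B)), ← Functor.map_comp,
    Iso.hom_inv_id_app, CategoryTheory.Functor.map_id, map_τ_hom]
  simp

end Aux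

end FiberedMor

/-!
Statement 6: if a morphism `p : ℬ ⟶ 𝒜` of `R`-linear fibered categories on a site
`(𝒰, 𝒯)` satisfies (G), (F) and (FF), and if `𝒜` is algebroid, then so is `ℬ`.
-/

theorem statement6 {R : Type u₀} [CommRing R] {𝒰 : Type u₁} [Category.{v₁} 𝒰]
    (𝒯 : CoveringSystem 𝒰) {ℬ 𝒜 : LinearFibered.{v₂, u₂} R 𝒰} (p : FiberedMor ℬ 𝒜)
    (hG : p.SatisfiesG 𝒯) (hF : p.SatisfiesF 𝒯) (hFF : p.SatisfiesFF 𝒯)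
    (h𝒜 : 𝒜.IsAlgebroid 𝒯) :
    ℬ.IsAlgebroid 𝒯 := by
  constructor
  · intro U
    obtain ⟨S, hS, hne⟩ := h𝒜.1 U
    refine 𝒯.exists_bind (fun V _ => Nonempty (ℬ.Fib V)) hS ?_
    intro V f hf
    obtain ⟨A⟩ := hne hf
    obtain ⟨T, hT, hB⟩ := hG V A
    exact ⟨T, hT, fun W g hg => ⟨(hB hg).choose⟩⟩
  · intro U B B'
    obtain ⟨S, hS, hiso⟩ := h𝒜.2 U ((p.app U).obj B) ((p.app U).obj B')
    refine 𝒯.exists_bind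
      (fun V f => Nonempty ((ℬ.res f).obj B ≅ (ℬ.res f).obj B')) hS ?_
    intro V f hf
    obtain ⟨a⟩ := hiso hf
    obtain ⟨S₁, hS₁, hb⟩ := hF B B' f a.hom
    refine 𝒯.exists_bind _ hS₁ ?_
    intro W g hg
    obtain ⟨b, hbeq⟩ := hb hg
    set a' : (𝒜.res (g ≫ f)).obj ((p.app U).obj B') ⟶ (𝒜.res (g ≫ f)).obj ((p.app U).obj B) :=
      (𝒜.τ g f).hom.app ((p.app U).obj B') ≫ (𝒜.res g).map a.inv ≫
        (𝒜.τ g f).inv.app ((p.app U).obj B) with ha'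
    obtain ⟨S₂, hS₂, hc⟩ := hF B' B (g ≫ f) a'
    refine 𝒯.exists_bind _ hS₂ ?_
    intro X m hm
    obtain ⟨c, hceq⟩ := hc hm
    set b₁ : (ℬ.res (g ≫ f)).obj B ⟶ (ℬ.res (g ≫ f)).obj B' :=
      (ℬ.τ g f).hom.app B ≫ b ≫ (ℬ.τ g f).inv.app B' with hb₁
    have hmapb : (p.app W).map b =
        ((p.ident f g B).hom ≫ (𝒜.res g).map a.hom) ≫ (p.ident f g B').inv :=
      (Iso.eq_comp_inv _).mpr hbeq
    have hmapc : (p.app X).map c =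
        ((p.ident (g ≫ f) m B').hom ≫ (𝒜.res m).map a') ≫ (p.ident (g ≫ f) m B).inv :=
      (Iso.eq_comp_inv _).mpr hceq
    have hmapb₁ : (p.app W).map b₁ =
        (p.comm (g ≫ f)).hom.app B ≫ (𝒜.τ g f).hom.app ((p.app U).obj B) ≫
          (𝒜.res g).map a.hom ≫ (𝒜.τ g f).inv.app ((p.app U).obj B') ≫
            (p.comm (g ≫ f)).inv.app B' := by
      simp [hb₁, hmapb, p.map_τ_hom f g B, p.map_τ_inv f g B']
    have hnatb₁ : (p.app X).map ((ℬ.res m).map b₁) =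
        (p.comm m).hom.app ((ℬ.res (g ≫ f)).obj B) ≫
          (𝒜.res m).map ((p.app W).map b₁) ≫
            (p.comm m).inv.app ((ℬ.res (g ≫ f)).obj B') := by
      have hn := (p.comm m).hom.naturality b₁
      simp only [Functor.comp_map] at hn
      rw [← Category.assoc, ← hn]
      simp
    have hinner : (p.app W).map b₁ ≫ (p.comm (g ≫ f)).hom.app B' ≫ a' ≫
        (p.comm (g ≫ f)).inv.app B = 𝟙 _ := by
      rw [hmapb₁]; simp [ha']
    have hinner2 : (p.comm (g ≫ f)).hom.app B' ≫ a' ≫ (p.comm (g ≫ f)).inv.app B ≫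
        (p.app W).map b₁ = 𝟙 _ := by
      rw [hmapb₁]; simp [ha']
    have hcomb : (p.app X).map ((ℬ.res m).map b₁ ≫ c) =
        (p.comm m).hom.app ((ℬ.res (g ≫ f)).obj B) ≫
          (𝒜.res m).map ((p.app W).map b₁ ≫ (p.comm (g ≫ f)).hom.app B' ≫ a' ≫
            (p.comm (g ≫ f)).inv.app B) ≫
          (p.comm m).inv.app ((ℬ.res (g ≫ f)).obj B) := by
      rw [CategoryTheory.Functor.map_comp, hnatb₁, hmapc]
      simp [FiberedMor.ident, CategoryTheory.Functor.map_comp]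
    have hcomb2 : (p.app X).map (c ≫ (ℬ.res m).map b₁) =
        (p.comm m).hom.app ((ℬ.res (g ≫ f)).obj B') ≫
          (𝒜.res m).map ((p.comm (g ≫ f)).hom.app B' ≫ a' ≫ (p.comm (g ≫ f)).inv.app B ≫
            (p.app W).map b₁) ≫
          (p.comm m).inv.app ((ℬ.res (g ≫ f)).obj B') := by
      rw [CategoryTheory.Functor.map_comp, hnatb₁, hmapc]
      simp [FiberedMor.ident, CategoryTheory.Functor.map_comp]
    have claim1 : (p.app X).map ((ℬ.res m).map b₁ ≫ c) = 𝟙 _ := by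
      rw [hcomb, hinner]; simp
    have claim2 : (p.app X).map (c ≫ (ℬ.res m).map b₁) = 𝟙 _ := by
      rw [hcomb2, hinner2]; simp
    have he1 : (p.app X).map ((ℬ.res m).map b₁ ≫ c - 𝟙 _) = 0 := by
      rw [Functor.map_sub, claim1, CategoryTheory.Functor.map_id, sub_self]
    obtain ⟨S₃, hS₃, hz₁⟩ := hFF _ _ m ((ℬ.res m).map b₁ ≫ c - 𝟙 _) he1
    refine 𝒯.exists_bind _ hS₃ ?_
    intro Y k hk
    have hz1 := hz₁ hk
    have he2 : (p.app Y).map ((ℬ.res k).map (c ≫ (ℬ.res m).map b₁ - 𝟙 _)) = 0 := by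
      have hn := (p.comm k).hom.naturality (c ≫ (ℬ.res m).map b₁ - 𝟙 _)
      simp only [Functor.comp_map] at hn
      have hz : (p.app X).map (c ≫ (ℬ.res m).map b₁ - 𝟙 _) = 0 := by
        rw [Functor.map_sub, claim2, CategoryTheory.Functor.map_id, sub_self]
      rw [← cancel_mono ((p.comm k).hom.app ((ℬ.res m).obj ((ℬ.res (g ≫ f)).obj B'))), hn, hz]
      simp
    obtain ⟨S₄, hS₄, hz₂⟩ := hFF _ _ k ((ℬ.res k).map (c ≫ (ℬ.res m).map b₁ - 𝟙 _)) he2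
    refine ⟨S₄, hS₄, ?_⟩
    intro Z l hl
    have h1 : (ℬ.res l).map ((ℬ.res k).map ((ℬ.res m).map b₁ ≫ c - 𝟙 _)) = 0 := by
      rw [hz1, Functor.map_zero]
    have h2 := hz₂ hl
    simp only [Functor.map_sub, CategoryTheory.Functor.map_comp, CategoryTheory.Functor.map_id, sub_eq_zero] at h1 h2
    have isoMain :
        (ℬ.res l).obj ((ℬ.res k).obj ((ℬ.res m).obj ((ℬ.res (g ≫ f)).obj B))) ≅
          (ℬ.res l).obj ((ℬ.res k).obj ((ℬ.res m).obj ((ℬ.res (g ≫ f)).obj B'))) :=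
      { hom := (ℬ.res l).map ((ℬ.res k).map ((ℬ.res m).map b₁))
        inv := (ℬ.res l).map ((ℬ.res k).map c)
        hom_inv_id := by simpa using h1
        inv_hom_id := by simpa using h2 }
    have hφ : (((l ≫ k) ≫ m) ≫ g) ≫ f = (l ≫ k) ≫ m ≫ g ≫ f := by
      simp only [Category.assoc]
    show Nonempty ((ℬ.res ((((l ≫ k) ≫ m) ≫ g) ≫ f)).obj B ≅
      (ℬ.res ((((l ≫ k) ≫ m) ≫ g) ≫ f)).obj B')
    rw [hφ]
    have J : ∀ D : ℬ.Fib U, (ℬ.res ((l ≫ k) ≫ m ≫ g ≫ f)).obj D ≅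
        (ℬ.res l).obj ((ℬ.res k).obj ((ℬ.res m).obj ((ℬ.res (g ≫ f)).obj D))) :=
      fun D => (ℬ.τ (l ≫ k) (m ≫ g ≫ f)).app D ≪≫
        (ℬ.res (l ≫ k)).mapIso ((ℬ.τ m (g ≫ f)).app D) ≪≫
        (ℬ.τ l k).app ((ℬ.res m).obj ((ℬ.res (g ≫ f)).obj D))
    exact ⟨J B ≪≫ isoMain ≪≫ (J B').symm⟩
end

section
/- For all open subsets U and V of a topological space X there are natural isomorphisms of endofunctors of the category Sh(X, R) of sheaves of R-modules: q_U ∘ q_V ≅ q_{U∩V} ≅ q_V ∘ q_U. In particular the localization endofunctors q_U and q_V commute; this expresses that the localizing Serre subcategories Z(U) = Ker(j_U^*) and Z(V) = Ker(j_V^*) of Sh(X, R) are compatible with Z(U) ∗ Z(V) = Z(U ∩ V). -/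
/-!
Statement 10: for open subsets `U`, `V` of a topological space `X` there are natural
isomorphisms of endofunctors of the category of sheaves of `R`-modules on `X`:
`q_U ∘ q_V ≅ q_{U ∩ V} ≅ q_V ∘ q_U`, where `q_U = j_{U*} ∘ j_U^*` is the localization
endofunctor associated to the open inclusion `j_U : U ⟶ X`.  In particular `q_U` and
`q_V` commute.
-/

open CategoryTheory TopologicalSpace

universe u

/-- The localization endofunctor `q_U = j_{U*} ∘ j_U^*` of the category of sheaves of
`R`-modules on `X` associated to an open subset `U ⊆ X`; concretely
`(q_U F)(W) = F(W ∩ U)`. -/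
noncomputable def qFunctor (R : Type u) [CommRing R] (X : TopCat.{u}) (U : Opens X) :
    X.Sheaf (ModuleCat.{u} R) ⥤ X.Sheaf (ModuleCat.{u} R) :=
  TopCat.Sheaf.pullback (ModuleCat.{u} R) U.inclusion' ⋙
    TopCat.Sheaf.pushforward (ModuleCat.{u} R) U.inclusion'

noncomputable section Stmt10Aux

variable (R : Type u) [CommRing R] (X : TopCat.{u})

/-- The functor `Opens X ⥤ Opens X`, `W ↦ W ⊓ U`. -/
def stmt10m (U : Opens X) : Opens X ⥤ Opens X :=
  Opens.map U.inclusion' ⋙ U.isOpenEmbedding.isOpenMap.functor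

instance (U : Opens X) :
    (stmt10m X U).IsContinuous (Opens.grothendieckTopology X) (Opens.grothendieckTopology X) := by
  haveI := U.isOpenEmbedding.functor_isContinuous
  exact Functor.isContinuous_comp (Opens.map U.inclusion')
    U.isOpenEmbedding.isOpenMap.functor _ (Opens.grothendieckTopology _) _

/-- Restriction of sheaves to an open subset, by precomposition with the image functor. -/
def stmt10res (U : Opens X) :
    X.Sheaf (ModuleCat.{u} R) ⥤ TopCat.Sheaf (ModuleCat.{u} R) ((Opens.toTopCat X).obj U) :=
  haveI := U.isOpenEmbedding.functor_isContinuous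
  U.isOpenEmbedding.isOpenMap.functor.sheafPushforwardContinuous (ModuleCat.{u} R)
    (Opens.grothendieckTopology _) (Opens.grothendieckTopology X)

/-- The presheaf-level adjunction between restriction and pushforward. -/
def stmt10presAdj (U : Opens X) :
    (Functor.whiskeringLeft _ _ (ModuleCat.{u} R)).obj U.isOpenEmbedding.isOpenMap.functor.op ⊣
    (Functor.whiskeringLeft _ _ (ModuleCat.{u} R)).obj (Opens.map U.inclusion').op :=
  Adjunction.whiskerLeft _
    (Adjunction.op U.isOpenEmbedding.isOpenMap.adjunction)

/-- The sheaf-level adjunction between restriction and pushforward. -/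
def stmt10resAdj (U : Opens X) :
    stmt10res R X U ⊣ TopCat.Sheaf.pushforward (ModuleCat.{u} R) U.inclusion' :=
  (stmt10presAdj R X U).restrictFullyFaithful
    (fullyFaithfulSheafToPresheaf _ _) (fullyFaithfulSheafToPresheaf _ _)
    (Iso.refl _) (Iso.refl _)

/-- The sheaf endofunctor given by precomposition with a continuous `m : Opens X ⥤ Opens X`. -/
def stmt10QGen (m : Opens X ⥤ Opens X)
    [m.IsContinuous (Opens.grothendieckTopology X) (Opens.grothendieckTopology X)] :
    X.Sheaf (ModuleCat.{u} R) ⥤ X.Sheaf (ModuleCat.{u} R) :=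
  m.sheafPushforwardContinuous (ModuleCat.{u} R) (Opens.grothendieckTopology X)
    (Opens.grothendieckTopology X)

/-- The sheaf pullback along an open inclusion agrees with restriction, by uniqueness of
left adjoints. -/
def stmt10pullbackIsoRes (U : Opens X) :
    TopCat.Sheaf.pullback (ModuleCat.{u} R) U.inclusion' ≅ stmt10res R X U :=
  Adjunction.leftAdjointUniq
    (TopCat.Sheaf.pullbackPushforwardAdjunction (ModuleCat.{u} R) U.inclusion')
    (stmt10resAdj R X U)

/-- `q_U` is isomorphic to precomposition with `W ↦ W ⊓ U`. -/
def stmt10qIso (U : Opens X) : qFunctor R X U ≅ stmt10QGen R X (stmt10m X U) :=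
  Functor.isoWhiskerRight (stmt10pullbackIsoRes R X U)
      (TopCat.Sheaf.pushforward (ModuleCat.{u} R) U.inclusion') ≪≫
    Iso.refl _

lemma stmt10m_comp_eq (U V : Opens X) : stmt10m X (U ⊓ V) = stmt10m X U ⋙ stmt10m X V := by
  refine CategoryTheory.Functor.ext (fun W => ?_) (fun _ _ _ => Subsingleton.elim _ _)
  simp only [stmt10m, Functor.comp_obj, Opens.functor_map_eq_inf, inf_assoc]

def stmt10QGenCompIso (m₁ m₂ m₃ : Opens X ⥤ Opens X)
    [m₁.IsContinuous (Opens.grothendieckTopology X) (Opens.grothendieckTopology X)]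
    [m₂.IsContinuous (Opens.grothendieckTopology X) (Opens.grothendieckTopology X)]
    [m₃.IsContinuous (Opens.grothendieckTopology X) (Opens.grothendieckTopology X)]
    (h : m₃ = m₂ ⋙ m₁) :
    stmt10QGen R X m₁ ⋙ stmt10QGen R X m₂ ≅ stmt10QGen R X m₃ := by
  subst h
  exact Iso.refl _

/-- The key isomorphism `q_U ∘ q_V ≅ q_{U ⊓ V}`. -/
def stmt10key (U V : Opens X) : qFunctor R X V ⋙ qFunctor R X U ≅ qFunctor R X (U ⊓ V) :=
  (Functor.isoWhiskerRight (stmt10qIso R X V) (qFunctor R X U) ≪≫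
      Functor.isoWhiskerLeft (stmt10QGen R X (stmt10m X V)) (stmt10qIso R X U)) ≪≫
    stmt10QGenCompIso R X (stmt10m X V) (stmt10m X U) (stmt10m X (U ⊓ V))
      (stmt10m_comp_eq X U V) ≪≫
    (stmt10qIso R X (U ⊓ V)).symm

end Stmt10Aux

theorem statement10 (R : Type u) [CommRing R] (X : TopCat.{u}) (U V : Opens X) :
    -- `q_U ∘ q_V ≅ q_{U ∩ V}`:
    Nonempty (qFunctor R X V ⋙ qFunctor R X U ≅ qFunctor R X (U ⊓ V)) ∧
    -- `q_{U ∩ V} ≅ q_V ∘ q_U`: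
    Nonempty (qFunctor R X (U ⊓ V) ≅ qFunctor R X U ⋙ qFunctor R X V) ∧
    -- in particular, the localization endofunctors `q_U` and `q_V` commute:
    Nonempty (qFunctor R X V ⋙ qFunctor R X U ≅ qFunctor R X U ⋙ qFunctor R X V) := by
  have e2 : qFunctor R X (U ⊓ V) ≅ qFunctor R X U ⋙ qFunctor R X V :=
    eqToIso (by rw [inf_comm]) ≪≫ (stmt10key R X V U).symm
  exact ⟨⟨stmt10key R X U V⟩, ⟨e2⟩, ⟨stmt10key R X U V ≪≫ e2⟩⟩
end

section
/- Let 𝒜 be an R-linear fibered category on a base category 𝒰 such that every fiber 𝒜(U) is an algebroid. Then there exists a twisted presheaf of R-algebras 𝒪 on 𝒰 (an R-linear fibered category all of whose fibers have exactly one object) and an equivalence of R-linear fibered categories 𝒪 ≅ 𝒜. -/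
open CategoryTheory Limits

universe w v₂ u₂ v₁ u₁ u₀

variable {R : Type u₀} [CommRing R] {𝒰 : Type u₁} [Category.{v₁} 𝒰]

/-!
Statement 11: let `𝒜` be an `R`-linear fibered category on a base category `𝒰` such
that every fiber `𝒜(U)` is an algebroid (nonempty with all objects isomorphic).  Then
there exist a twisted presheaf of `R`-algebras `𝒪` on `𝒰` — an `R`-linear fibered
category all of whose fibers have exactly one object — and an equivalence of `R`-linear
fibered categories `𝒪 ≅ 𝒜`.
-/

namespace S11

variable {R : Type u₀} [CommRing R] {𝒰 : Type u₁} [Category.{v₁} 𝒰]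
variable (𝒜 : LinearFibered.{v₂, u₂} R 𝒰) (A0 : ∀ U : 𝒰, 𝒜.Fib U)
  (e : ∀ (U : 𝒰) (A : 𝒜.Fib U), A0 U ≅ A)

/-- The one-object full subcategory on the chosen object `A0 U`. -/
abbrev Ob (U : 𝒰) : Type u₂ := ObjectProperty.FullSubcategory (fun A : 𝒜.Fib U => A = A0 U)

/-- Retraction of `𝒜.Fib U` onto the one-object subcategory, via the chosen isos. -/
def retr (U : 𝒰) : 𝒜.Fib U ⥤ Ob 𝒜 A0 U where
  obj _ := ⟨A0 U, rfl⟩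
  map {A B} f := ObjectProperty.homMk ((e U A).hom ≫ f ≫ (e U B).inv : A0 U ⟶ A0 U)
  map_id A := by
    ext
    show (e U A).hom ≫ 𝟙 A ≫ (e U A).inv = 𝟙 (A0 U)
    simp
  map_comp {A B C} f g := by
    ext
    show (e U A).hom ≫ (f ≫ g) ≫ (e U C).inv =
      ((e U A).hom ≫ f ≫ (e U B).inv) ≫ ((e U B).hom ≫ g ≫ (e U C).inv)
    simp

instance retrAdditive (U : 𝒰) : (retr 𝒜 A0 e U).Additive where
  map_add {A B f g} := by
    ext
    show (e U A).hom ≫ (f + g) ≫ (e U B).inv =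
      ((e U A).hom ≫ f ≫ (e U B).inv) + ((e U A).hom ≫ g ≫ (e U B).inv)
    simp [Preadditive.comp_add, Preadditive.add_comp]

instance retrLinear (U : 𝒰) : (retr 𝒜 A0 e U).Linear R where
  map_smul {A B f r} := by
    ext
    show (e U A).hom ≫ (r • f) ≫ (e U B).inv = r • ((e U A).hom ≫ f ≫ (e U B).inv)
    simp [Linear.comp_smul, Linear.smul_comp]

/-- The restriction functor of the twisted presheaf. -/
def resO {V U : 𝒰} (i : V ⟶ U) : Ob 𝒜 A0 U ⥤ Ob 𝒜 A0 V :=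
  ObjectProperty.ι _ ⋙ 𝒜.res i ⋙ retr 𝒜 A0 e V

instance resOAdditive {V U : 𝒰} (i : V ⟶ U) : (resO 𝒜 A0 e i).Additive := by
  unfold resO; infer_instance

instance resOLinear {V U : 𝒰} (i : V ⟶ U) : (resO 𝒜 A0 e i).Linear R := by
  unfold resO; infer_instance

/-- Component of the twisting isomorphism, at the level of `𝒜`. -/
def τc {W V U : 𝒰} (j : W ⟶ V) (i : V ⟶ U) (A : 𝒜.Fib U) :
    (𝒜.res (j ≫ i)).obj A ⟶ (𝒜.res j).obj (A0 V) :=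
  (𝒜.τ j i).hom.app A ≫ (𝒜.res j).map (e V ((𝒜.res i).obj A)).inv

/-- Inverse of `τc`. -/
def τcInv {W V U : 𝒰} (j : W ⟶ V) (i : V ⟶ U) (A : 𝒜.Fib U) :
    (𝒜.res j).obj (A0 V) ⟶ (𝒜.res (j ≫ i)).obj A :=
  (𝒜.res j).map (e V ((𝒜.res i).obj A)).hom ≫ (𝒜.τ j i).inv.app A

lemma τc_τcInv {W V U : 𝒰} (j : W ⟶ V) (i : V ⟶ U) (A : 𝒜.Fib U) :
    τc 𝒜 A0 e j i A ≫ τcInv 𝒜 A0 e j i A = 𝟙 _ := by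
  simp [τc, τcInv, ← Functor.map_comp_assoc]

lemma τcInv_τc {W V U : 𝒰} (j : W ⟶ V) (i : V ⟶ U) (A : 𝒜.Fib U) :
    τcInv 𝒜 A0 e j i A ≫ τc 𝒜 A0 e j i A = 𝟙 _ := by
  simp [τc, τcInv, ← Functor.map_comp]

lemma e_hom_eqToHom {U : 𝒰} {A B : 𝒜.Fib U} (h : A = B) :
    (e U A).hom ≫ eqToHom h = (e U B).hom := by subst h; simp

/-- The twisting natural isomorphism of the twisted presheaf. -/
def τO {W V U : 𝒰} (j : W ⟶ V) (i : V ⟶ U) :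
    resO 𝒜 A0 e (j ≫ i) ≅ resO 𝒜 A0 e i ⋙ resO 𝒜 A0 e j :=
  NatIso.ofComponents
    (fun X =>
      { hom := (retr 𝒜 A0 e W).map (τc 𝒜 A0 e j i X.obj)
        inv := (retr 𝒜 A0 e W).map (τcInv 𝒜 A0 e j i X.obj)
        hom_inv_id := by
          show (retr 𝒜 A0 e W).map (τc 𝒜 A0 e j i X.obj) ≫
            (retr 𝒜 A0 e W).map (τcInv 𝒜 A0 e j i X.obj) = 𝟙 _
          rw [← Functor.map_comp, τc_τcInv]
          exact (retr 𝒜 A0 e W).map_id _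
        inv_hom_id := by
          show (retr 𝒜 A0 e W).map (τcInv 𝒜 A0 e j i X.obj) ≫
            (retr 𝒜 A0 e W).map (τc 𝒜 A0 e j i X.obj) = 𝟙 _
          rw [← Functor.map_comp, τcInv_τc]
          exact (retr 𝒜 A0 e W).map_id _ })
    (fun {X Y} f => by
      show (retr 𝒜 A0 e W).map ((𝒜.res (j ≫ i)).map f.hom) ≫
          (retr 𝒜 A0 e W).map (τc 𝒜 A0 e j i Y.obj) =
        (retr 𝒜 A0 e W).map (τc 𝒜 A0 e j i X.obj) ≫
          (retr 𝒜 A0 e W).map ((𝒜.res j).map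
            ((e V ((𝒜.res i).obj X.obj)).hom ≫ (𝒜.res i).map f.hom ≫
              (e V ((𝒜.res i).obj Y.obj)).inv))
      rw [← Functor.map_comp, ← Functor.map_comp]
      congr 1
      simp [τc])

lemma τO_hom_app {W V U : 𝒰} (j : W ⟶ V) (i : V ⟶ U) (X : Ob 𝒜 A0 U) :
    (τO 𝒜 A0 e j i).hom.app X = (retr 𝒜 A0 e W).map (τc 𝒜 A0 e j i X.obj) := rfl

/-- `𝒜`-level cocycle identity for the components `τc`. -/
lemma cocycle_component {Z W V U : 𝒰} (k : Z ⟶ W) (j : W ⟶ V) (i : V ⟶ U)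
    (A : 𝒜.Fib U) :
    τc 𝒜 A0 e (k ≫ j) i A ≫ τc 𝒜 A0 e k j (A0 V) =
      eqToHom (by rw [Category.assoc]) ≫ τc 𝒜 A0 e k (j ≫ i) A ≫
        (𝒜.res k).map ((e W ((𝒜.res (j ≫ i)).obj A)).hom ≫ τc 𝒜 A0 e j i A ≫
          (e W ((𝒜.res j).obj (A0 V))).inv) := by
  have hc := NatTrans.congr_app (𝒜.cocycle k j i) A
  simp only [NatTrans.comp_app, Functor.whiskerLeft_app, Functor.whiskerRight_app, eqToHom_app,
    Functor.comp_obj] at hc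
  have hnat := (𝒜.τ k j).hom.naturality (e V ((𝒜.res i).obj A)).inv
  simp only [τc, Functor.map_comp, Category.assoc]
  rw [← Category.assoc ((𝒜.res (k ≫ j)).map _), hnat]
  simp only [Functor.comp_map, ← Category.assoc]
  congr 1
  simp only [Category.assoc]
  rw [reassoc_of% hc]
  simp [← Functor.map_comp]

/-- The cocycle condition for the twisted presheaf. -/
lemma cocycleO {Z W V U : 𝒰} (k : Z ⟶ W) (j : W ⟶ V) (i : V ⟶ U) :
    (τO 𝒜 A0 e (k ≫ j) i).hom ≫ Functor.whiskerLeft (resO 𝒜 A0 e i) (τO 𝒜 A0 e k j).hom =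
      eqToHom (by rw [Category.assoc]) ≫ (τO 𝒜 A0 e k (j ≫ i)).hom ≫
        Functor.whiskerRight (τO 𝒜 A0 e j i).hom (resO 𝒜 A0 e k) := by
  apply NatTrans.ext
  funext X
  rw [NatTrans.comp_app, NatTrans.comp_app, NatTrans.comp_app, eqToHom_app]
  show (retr 𝒜 A0 e Z).map (τc 𝒜 A0 e (k ≫ j) i X.obj) ≫
      (retr 𝒜 A0 e Z).map (τc 𝒜 A0 e k j (A0 V)) =
    eqToHom (Functor.congr_obj (by rw [Category.assoc] :
        resO 𝒜 A0 e ((k ≫ j) ≫ i) = resO 𝒜 A0 e (k ≫ j ≫ i)) X) ≫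
      (retr 𝒜 A0 e Z).map (τc 𝒜 A0 e k (j ≫ i) X.obj) ≫
      (retr 𝒜 A0 e Z).map ((𝒜.res k).map
        ((e W ((𝒜.res (j ≫ i)).obj X.obj)).hom ≫ τc 𝒜 A0 e j i X.obj ≫
          (e W ((𝒜.res j).obj (A0 V))).inv))
  rw [← Functor.map_comp, cocycle_component, Functor.map_comp, Functor.map_comp,
    eqToHom_map]
  rfl

/-- The twisted presheaf of `R`-algebras. -/
def O : LinearFibered.{v₂, u₂} R 𝒰 where
  Fib := Ob 𝒜 A0
  cat := fun _ => inferInstance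
  preadd := fun _ => inferInstance
  lin := fun _ => inferInstance
  res := fun i => resO 𝒜 A0 e i
  resAdditive := fun i => inferInstance
  resLinear := fun i => inferInstance
  τ := fun j i => τO 𝒜 A0 e j i
  cocycle := fun k j i => cocycleO 𝒜 A0 e k j i

/-- The comparison isomorphism for the equivalence `𝒪 → 𝒜`. -/
def commIso {V U : 𝒰} (i : V ⟶ U) :
    resO 𝒜 A0 e i ⋙ ObjectProperty.ι (fun A : 𝒜.Fib V => A = A0 V) ≅
      ObjectProperty.ι (fun A : 𝒜.Fib U => A = A0 U) ⋙ 𝒜.res i :=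
  NatIso.ofComponents (fun X => e V ((𝒜.res i).obj X.obj))
    (fun {X Y} f => by
      show ((e V ((𝒜.res i).obj X.obj)).hom ≫ (𝒜.res i).map f.hom ≫
          (e V ((𝒜.res i).obj Y.obj)).inv) ≫ (e V ((𝒜.res i).obj Y.obj)).hom =
        (e V ((𝒜.res i).obj X.obj)).hom ≫ (𝒜.res i).map f.hom
      simp)

/-- The equivalence of fibered categories from the twisted presheaf to `𝒜`. -/
def mor : FiberedMor (O 𝒜 A0 e) 𝒜 where
  app U := ObjectProperty.ι _
  appAdditive := fun U =>
    inferInstanceAs (ObjectProperty.ι (fun A : 𝒜.Fib U => A = A0 U)).Additive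
  appLinear := fun U =>
    inferInstanceAs ((ObjectProperty.ι (fun A : 𝒜.Fib U => A = A0 U)).Linear R)
  comm := fun i => commIso 𝒜 A0 e i
  comm_comp := fun {W V U} j i => by
    apply NatTrans.ext
    funext X
    show ((e W ((𝒜.res (j ≫ i)).obj X.obj)).hom ≫ τc 𝒜 A0 e j i X.obj ≫
        (e W ((𝒜.res j).obj (A0 V))).inv) ≫ (e W ((𝒜.res j).obj (A0 V))).hom ≫
        (𝒜.res j).map (e V ((𝒜.res i).obj X.obj)).hom =
      (e W ((𝒜.res (j ≫ i)).obj X.obj)).hom ≫ (𝒜.τ j i).hom.app X.obj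
    simp [τc, ← Functor.map_comp]

end S11

theorem statement11 {R : Type u₀} [CommRing R] {𝒰 : Type u₁} [Category.{v₁} 𝒰]
    (𝒜 : LinearFibered.{v₂, u₂} R 𝒰)
    (halg : ∀ U : 𝒰, Nonempty (𝒜.Fib U) ∧ ∀ A A' : 𝒜.Fib U, Nonempty (A ≅ A')) :
    ∃ (𝒪 : LinearFibered.{v₂, u₂} R 𝒰) (e : FiberedMor 𝒪 𝒜),
      (∀ U : 𝒰, Nonempty (Unique (𝒪.Fib U))) ∧
      (∀ U : 𝒰, (e.app U).IsEquivalence) := by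
  classical
  let A0 : ∀ U : 𝒰, 𝒜.Fib U := fun U => (halg U).1.some
  let e : ∀ (U : 𝒰) (A : 𝒜.Fib U), A0 U ≅ A := fun U A => ((halg U).2 (A0 U) A).some
  refine ⟨S11.O 𝒜 A0 e, S11.mor 𝒜 A0 e, fun U => ⟨?_⟩, fun U => ?_⟩
  · exact
      { default := ⟨A0 U, rfl⟩
        uniq := fun X => by
          obtain ⟨A, h⟩ := X
          subst h
          rfl }
  · exact
      { faithful :=
          inferInstanceAs (ObjectProperty.ι (fun A : 𝒜.Fib U => A = A0 U)).Faithful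
        full :=
          inferInstanceAs (ObjectProperty.ι (fun A : 𝒜.Fib U => A = A0 U)).Full
        essSurj := ⟨fun A => ⟨⟨A0 U, rfl⟩, ⟨e U A⟩⟩⟩ }
end
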